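/- The negation rules are admissible in cut-free TCL: if Γ ⊢ Δ, α is provable in cut-free TCL then ¬α, Γ ⊢ Δ is provable in cut-free TCL, and if α, Γ ⊢ Δ is provable in cut-free TCL then Γ ⊢ Δ, ¬α is provable in cut-free TCL. -/

import Mathlib

inductive PFml : Type
  | var : ℕ → PFml
  | and : PFml → PFml → PFml
  | or  : PFml → PFml → PFml
  | imp : PFml → PFml → PFml
  | neg : PFml → PFml
  deriving DecidableEq

open PFml

abbrev PCtx := Finset PFml

/-- Gentzen's propositional LK; the Boolean index is `true` iff cut is allowed. -/
inductive LK : Bool → PCtx → PCtx → Prop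
  | initV (c : Bool) (p : ℕ) : LK c {var p} {var p}
  | cut (Γ Δ : PCtx) (α : PFml) :
      LK true Γ {α} → LK true (insert α Γ) Δ → LK true Γ Δ
  | weL (c Γ Δ α) : LK c Γ Δ → LK c (insert α Γ) Δ
  | weR (c Γ Δ α) : LK c Γ Δ → LK c Γ (insert α Δ)
  | andL (c Γ Δ α β) : LK c (insert α (insert β Γ)) Δ → LK c (insert (α.and β) Γ) Δ
  | andR (c Γ Δ α β) : LK c Γ (insert α Δ) → LK c Γ (insert β Δ) → LK c Γ (insert (α.and β) Δ)
  | orL (c Γ Δ α β) : LK c (insert α Γ) Δ → LK c (insert β Γ) Δ → LK c (insert (α.or β) Γ) Δ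
  | orR (c Γ Δ α β) : LK c Γ (insert α (insert β Δ)) → LK c Γ (insert (α.or β) Δ)
  | impL (c Γ Δ α β) : LK c Γ (insert α Δ) → LK c (insert β Γ) Δ → LK c (insert (α.imp β) Γ) Δ
  | impR (c Γ Δ α β) : LK c (insert α Γ) (insert β Δ) → LK c Γ (insert (α.imp β) Δ)
  | negL (c Γ Δ α) : LK c Γ (insert α Δ) → LK c (insert α.neg Γ) Δ
  | negR (c Γ Δ α) : LK c (insert α Γ) Δ → LK c Γ (insert α.neg Δ)

/-- The propositional twist sequent calculus TCL (the modal-free fragment of lTS4);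
    the Boolean index is `true` iff cut is allowed. -/
inductive TCL : Bool → PCtx → PCtx → Prop
  | initV (c : Bool) (p : ℕ) : TCL c {var p} {var p}
  | initNV (c : Bool) (p : ℕ) : TCL c {neg (var p)} {neg (var p)}
  | initL (c : Bool) (p : ℕ) : TCL c {neg (var p), var p} ∅
  | initR (c : Bool) (p : ℕ) : TCL c ∅ {neg (var p), var p}
  | cut (Γ Δ : PCtx) (α : PFml) :
      TCL true Γ {α} → TCL true (insert α Γ) Δ → TCL true Γ Δ
  | weL (c Γ Δ α) : TCL c Γ Δ → TCL c (insert α Γ) Δ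
  | weR (c Γ Δ α) : TCL c Γ Δ → TCL c Γ (insert α Δ)
  | andL (c Γ Δ α β) : TCL c (insert α (insert β Γ)) Δ → TCL c (insert (α.and β) Γ) Δ
  | andR (c Γ Δ α β) : TCL c Γ (insert α Δ) → TCL c Γ (insert β Δ) →
      TCL c Γ (insert (α.and β) Δ)
  | orL (c Γ Δ α β) : TCL c (insert α Γ) Δ → TCL c (insert β Γ) Δ →
      TCL c (insert (α.or β) Γ) Δ
  | orR (c Γ Δ α β) : TCL c Γ (insert α (insert β Δ)) → TCL c Γ (insert (α.or β) Δ)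
  | impL (c Γ Δ α β) : TCL c Γ (insert α Δ) → TCL c (insert β Γ) Δ →
      TCL c (insert (α.imp β) Γ) Δ
  | impR (c Γ Δ α β) : TCL c (insert α Γ) (insert β Δ) → TCL c Γ (insert (α.imp β) Δ)
  | nnL (c Γ Δ α) : TCL c (insert α Γ) Δ → TCL c (insert α.neg.neg Γ) Δ
  | nnR (c Γ Δ α) : TCL c Γ (insert α Δ) → TCL c Γ (insert α.neg.neg Δ)
  | nandL (c Γ Δ α β) : TCL c Γ (insert α Δ) → TCL c Γ (insert β Δ) →
      TCL c (insert (α.and β).neg Γ) Δ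
  | nandR (c Γ Δ α β) : TCL c (insert α (insert β Γ)) Δ → TCL c Γ (insert (α.and β).neg Δ)
  | norL (c Γ Δ α β) : TCL c Γ (insert α (insert β Δ)) → TCL c (insert (α.or β).neg Γ) Δ
  | norR (c Γ Δ α β) : TCL c (insert α Γ) Δ → TCL c (insert β Γ) Δ →
      TCL c Γ (insert (α.or β).neg Δ)
  | nimpL (c Γ Δ α β) : TCL c (insert α Γ) (insert β Δ) → TCL c (insert (α.imp β).neg Γ) Δ
  | nimpR (c Γ Δ α β) : TCL c Γ (insert α Δ) → TCL c (insert β Γ) Δ →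
      TCL c Γ (insert (α.imp β).neg Δ)

lemma TCL.mono {c} {Γ Δ Γ' Δ' : PCtx} (h : TCL c Γ Δ) (hΓ : Γ ⊆ Γ') (hΔ : Δ ⊆ Δ') :
    TCL c Γ' Δ' := by
  have key : ∀ (B A : PCtx), TCL c (Γ ∪ A) (Δ ∪ B) := by
    intro B
    induction B using Finset.induction_on with
    | empty =>
      intro A
      induction A using Finset.induction_on with
      | empty => simpa using h
      | insert _ _ ha ih => rw [Finset.union_insert]; exact TCL.weL _ _ _ _ (by simpa using ih)
    | insert _ _ hb ih =>
      intro A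
      rw [Finset.union_insert]
      exact TCL.weR _ _ _ _ (ih A)
  have h2 := key Δ' Γ'
  rwa [Finset.union_eq_right.mpr hΓ, Finset.union_eq_right.mpr hΔ] at h2

lemma sub_insert {a : PFml} {Θ S Δ : PCtx} (h : Θ ⊆ S ∪ Δ) :
    insert a Θ ⊆ S ∪ insert a Δ := by
  intro x hx
  rcases Finset.mem_insert.1 hx with rfl | hx
  · exact Finset.mem_union_right _ (Finset.mem_insert_self _ _)
  · rcases Finset.mem_union.1 (h hx) with h' | h'
    · exact Finset.mem_union_left _ h'
    · exact Finset.mem_union_right _ (Finset.mem_insert_of_mem h')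

lemma sub_insertL {a : PFml} {Θ S Δ : PCtx} (h : Θ ⊆ S ∪ Δ) :
    insert a Θ ⊆ insert a S ∪ Δ := by
  intro x hx
  rcases Finset.mem_insert.1 hx with rfl | hx
  · exact Finset.mem_union_left _ (Finset.mem_insert_self _ _)
  · rcases Finset.mem_union.1 (h hx) with h' | h'
    · exact Finset.mem_union_left _ (Finset.mem_insert_of_mem h')
    · exact Finset.mem_union_right _ h'

lemma dLL (p : ℕ) : TCL false {neg (neg (var p)), neg (var p)} ∅ := by
  have d0 : TCL false (insert (var p) {neg (var p)}) ∅ := by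
    have h := TCL.initL false p
    rwa [Finset.pair_comm] at h
  exact TCL.nnL false {neg (var p)} ∅ (var p) d0

lemma dRR (p : ℕ) : TCL false ∅ {neg (neg (var p)), neg (var p)} := by
  have d0 : TCL false ∅ (insert (var p) {neg (var p)}) := by
    have h := TCL.initR false p
    rwa [Finset.pair_comm] at h
  exact TCL.nnR false ∅ {neg (var p)} (var p) d0

lemma dLnn (p : ℕ) : TCL false {neg (neg (var p))} {var p} := by
  have d0 : TCL false (insert (var p) ∅) {var p} :=
    (TCL.initV false p).mono (by simp) subset_rfl
  have h := TCL.nnL false ∅ {var p} (var p) d0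
  simpa using h

lemma dRnn (p : ℕ) : TCL false {var p} {neg (neg (var p))} := by
  have d0 : TCL false {var p} (insert (var p) ∅) :=
    (TCL.initV false p).mono subset_rfl (by simp)
  have h := TCL.nnR false {var p} ∅ (var p) d0
  simpa using h

lemma negAdmP {Γ₀ Θ : PCtx} (h : TCL false Γ₀ Θ) :
    ∀ S Δ, Θ ⊆ S ∪ Δ → TCL false (Γ₀ ∪ S.image PFml.neg) Δ := by
  generalize hb : false = b at h
  induction h with
  | cut => exact absurd hb (by simp)
  | initV c p =>
    subst hb
    intro S Δ hsub
    rcases Finset.mem_union.1 (hsub (Finset.mem_singleton_self _)) with hS | hΔ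
    · have h1 := Finset.mem_image_of_mem PFml.neg hS
      exact (TCL.initL false p).mono
        (by simp [Finset.insert_subset_iff, h1]) (Finset.empty_subset _)
    · exact (TCL.initV false p).mono (Finset.subset_union_left)
        (Finset.singleton_subset_iff.2 hΔ)
  | initNV c p =>
    subst hb
    intro S Δ hsub
    rcases Finset.mem_union.1 (hsub (Finset.mem_singleton_self _)) with hS | hΔ
    · have h1 := Finset.mem_image_of_mem PFml.neg hS
      exact (dLL p).mono (by simp [Finset.insert_subset_iff, h1]) (Finset.empty_subset _)
    · exact (TCL.initNV false p).mono (Finset.subset_union_left)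
        (Finset.singleton_subset_iff.2 hΔ)
  | initL c p =>
    subst hb
    intro S Δ hsub
    exact (TCL.initL false p).mono (Finset.subset_union_left) (Finset.empty_subset _)
  | initR c p =>
    subst hb
    intro S Δ hsub
    have hn := Finset.mem_union.1 (hsub (Finset.mem_insert_self _ _))
    have hp := Finset.mem_union.1 (hsub (Finset.mem_insert_of_mem (Finset.mem_singleton_self _)))
    rcases hp with hpS | hpΔ
    · rcases hn with hnS | hnΔ
      · have h1 := Finset.mem_image_of_mem PFml.neg hnS
        have h2 := Finset.mem_image_of_mem PFml.neg hpS
        exact (dLL p).mono (by simp [Finset.insert_subset_iff, h1, h2]) (Finset.empty_subset _)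
      · have h2 := Finset.mem_image_of_mem PFml.neg hpS
        exact (TCL.initNV false p).mono (by simp [h2])
          (Finset.singleton_subset_iff.2 hnΔ)
    · rcases hn with hnS | hnΔ
      · have h1 := Finset.mem_image_of_mem PFml.neg hnS
        exact (dLnn p).mono (by simp [h1]) (Finset.singleton_subset_iff.2 hpΔ)
      · exact (TCL.initR false p).mono (Finset.empty_subset _)
          (by simp [Finset.insert_subset_iff, hnΔ, hpΔ])
  | weL c Γ Δ' γ h ih =>
    subst hb
    intro S Δ hsub
    rw [Finset.insert_union]
    exact TCL.weL _ _ _ _ (ih rfl S Δ hsub)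
  | weR c Γ Θ' γ h ih =>
    subst hb
    intro S Δ hsub
    exact ih rfl S Δ (fun x hx => hsub (Finset.mem_insert_of_mem hx))
  | andL c Γ Θ' a b h ih =>
    subst hb
    intro S Δ hsub
    have d := ih rfl S Δ hsub
    rw [Finset.insert_union, Finset.insert_union] at d
    rw [Finset.insert_union]
    exact TCL.andL _ _ _ _ _ d
  | orL c Γ Θ' a b h1 h2 ih1 ih2 =>
    subst hb
    intro S Δ hsub
    have d1 := ih1 rfl S Δ hsub
    have d2 := ih2 rfl S Δ hsub
    rw [Finset.insert_union] at d1 d2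
    rw [Finset.insert_union]
    exact TCL.orL _ _ _ _ _ d1 d2
  | impL c Γ Θ' a b h1 h2 ih1 ih2 =>
    subst hb
    intro S Δ hsub
    have d1 := ih1 rfl S (insert a Δ) (sub_insert hsub)
    have d2 := ih2 rfl S Δ hsub
    rw [Finset.insert_union] at d2
    rw [Finset.insert_union]
    exact TCL.impL _ _ _ _ _ d1 d2
  | nnL c Γ Θ' a h ih =>
    subst hb
    intro S Δ hsub
    have d := ih rfl S Δ hsub
    rw [Finset.insert_union] at d
    rw [Finset.insert_union]
    exact TCL.nnL _ _ _ _ d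
  | nandL c Γ Θ' a b h1 h2 ih1 ih2 =>
    subst hb
    intro S Δ hsub
    have d1 := ih1 rfl S (insert a Δ) (sub_insert hsub)
    have d2 := ih2 rfl S (insert b Δ) (sub_insert hsub)
    rw [Finset.insert_union]
    exact TCL.nandL _ _ _ _ _ d1 d2
  | norL c Γ Θ' a b h ih =>
    subst hb
    intro S Δ hsub
    have d := ih rfl S (insert a (insert b Δ)) (sub_insert (sub_insert hsub))
    rw [Finset.insert_union]
    exact TCL.norL _ _ _ _ _ d
  | nimpL c Γ Θ' a b h ih =>
    subst hb
    intro S Δ hsub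
    have d := ih rfl S (insert b Δ) (sub_insert hsub)
    rw [Finset.insert_union] at d
    rw [Finset.insert_union]
    exact TCL.nimpL _ _ _ _ _ d
  | andR c Γ Θ' a b h1 h2 ih1 ih2 =>
    subst hb
    intro S Δ hsub
    have hsub' := (Finset.insert_subset_iff.1 hsub).2
    have d1 := ih1 rfl S (insert a Δ) (sub_insert hsub')
    have d2 := ih2 rfl S (insert b Δ) (sub_insert hsub')
    rcases Finset.mem_union.1 ((Finset.insert_subset_iff.1 hsub).1) with hS | hΔ
    · have h1m := Finset.mem_image_of_mem PFml.neg hS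
      have d := TCL.nandL _ _ _ _ _ d1 d2
      rwa [Finset.insert_eq_self.2 (Finset.mem_union_right _ h1m)] at d
    · have d := TCL.andR _ _ _ _ _ d1 d2
      rwa [Finset.insert_eq_self.2 hΔ] at d
  | orR c Γ Θ' a b h ih =>
    subst hb
    intro S Δ hsub
    have hsub' := (Finset.insert_subset_iff.1 hsub).2
    have d := ih rfl S (insert a (insert b Δ)) (sub_insert (sub_insert hsub'))
    rcases Finset.mem_union.1 ((Finset.insert_subset_iff.1 hsub).1) with hS | hΔ
    · have h1m := Finset.mem_image_of_mem PFml.neg hS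
      have d' := TCL.norL _ _ _ _ _ d
      rwa [Finset.insert_eq_self.2 (Finset.mem_union_right _ h1m)] at d'
    · have d' := TCL.orR _ _ _ _ _ d
      rwa [Finset.insert_eq_self.2 hΔ] at d'
  | impR c Γ Θ' a b h ih =>
    subst hb
    intro S Δ hsub
    have hsub' := (Finset.insert_subset_iff.1 hsub).2
    have d := ih rfl S (insert b Δ) (sub_insert hsub')
    rw [Finset.insert_union] at d
    rcases Finset.mem_union.1 ((Finset.insert_subset_iff.1 hsub).1) with hS | hΔ
    · have h1m := Finset.mem_image_of_mem PFml.neg hS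
      have d' := TCL.nimpL _ _ _ _ _ d
      rwa [Finset.insert_eq_self.2 (Finset.mem_union_right _ h1m)] at d'
    · have d' := TCL.impR _ _ _ _ _ d
      rwa [Finset.insert_eq_self.2 hΔ] at d'
  | nnR c Γ Θ' a h ih =>
    subst hb
    intro S Δ hsub
    have hsub' := (Finset.insert_subset_iff.1 hsub).2
    rcases Finset.mem_union.1 ((Finset.insert_subset_iff.1 hsub).1) with hS | hΔ
    · have h1m := Finset.mem_image_of_mem PFml.neg hS
      have d := ih rfl (insert a S) Δ (sub_insertL hsub')
      rw [Finset.image_insert, Finset.union_insert] at d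
      have d' := TCL.nnL _ _ _ _ d
      rwa [Finset.insert_eq_self.2 (Finset.mem_union_right _ h1m)] at d'
    · have d := ih rfl S (insert a Δ) (sub_insert hsub')
      have d' := TCL.nnR _ _ _ _ d
      rwa [Finset.insert_eq_self.2 hΔ] at d'
  | nandR c Γ Θ' a b h ih =>
    subst hb
    intro S Δ hsub
    have hsub' := (Finset.insert_subset_iff.1 hsub).2
    have d := ih rfl S Δ hsub'
    rw [Finset.insert_union, Finset.insert_union] at d
    rcases Finset.mem_union.1 ((Finset.insert_subset_iff.1 hsub).1) with hS | hΔ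
    · have h1m := Finset.mem_image_of_mem PFml.neg hS
      have d' := TCL.nnL _ _ _ _ (TCL.andL _ _ _ _ _ d)
      rwa [Finset.insert_eq_self.2 (Finset.mem_union_right _ h1m)] at d'
    · have d' := TCL.nandR _ _ _ _ _ d
      rwa [Finset.insert_eq_self.2 hΔ] at d'
  | norR c Γ Θ' a b h1 h2 ih1 ih2 =>
    subst hb
    intro S Δ hsub
    have hsub' := (Finset.insert_subset_iff.1 hsub).2
    have d1 := ih1 rfl S Δ hsub'
    have d2 := ih2 rfl S Δ hsub'
    rw [Finset.insert_union] at d1 d2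
    rcases Finset.mem_union.1 ((Finset.insert_subset_iff.1 hsub).1) with hS | hΔ
    · have h1m := Finset.mem_image_of_mem PFml.neg hS
      have d' := TCL.nnL _ _ _ _ (TCL.orL _ _ _ _ _ d1 d2)
      rwa [Finset.insert_eq_self.2 (Finset.mem_union_right _ h1m)] at d'
    · have d' := TCL.norR _ _ _ _ _ d1 d2
      rwa [Finset.insert_eq_self.2 hΔ] at d'
  | nimpR c Γ Θ' a b h1 h2 ih1 ih2 =>
    subst hb
    intro S Δ hsub
    have hsub' := (Finset.insert_subset_iff.1 hsub).2
    have d1 := ih1 rfl S (insert a Δ) (sub_insert hsub')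
    have d2 := ih2 rfl S Δ hsub'
    rw [Finset.insert_union] at d2
    rcases Finset.mem_union.1 ((Finset.insert_subset_iff.1 hsub).1) with hS | hΔ
    · have h1m := Finset.mem_image_of_mem PFml.neg hS
      have d' := TCL.nnL _ _ _ _ (TCL.impL _ _ _ _ _ d1 d2)
      rwa [Finset.insert_eq_self.2 (Finset.mem_union_right _ h1m)] at d'
    · have d' := TCL.nimpR _ _ _ _ _ d1 d2
      rwa [Finset.insert_eq_self.2 hΔ] at d'

lemma negAdmQ {Θ Δ₀ : PCtx} (h : TCL false Θ Δ₀) :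
    ∀ S Γ, Θ ⊆ S ∪ Γ → TCL false Γ (Δ₀ ∪ S.image PFml.neg) := by
  generalize hb : false = b at h
  induction h with
  | cut => exact absurd hb (by simp)
  | initV c p =>
    subst hb
    intro S Γ hsub
    rcases Finset.mem_union.1 (hsub (Finset.mem_singleton_self _)) with hS | hΓ
    · have h1 := Finset.mem_image_of_mem PFml.neg hS
      exact (TCL.initR false p).mono (Finset.empty_subset _)
        (by simp [Finset.insert_subset_iff, h1])
    · exact (TCL.initV false p).mono (Finset.singleton_subset_iff.2 hΓ)
        (Finset.subset_union_left)
  | initNV c p =>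
    subst hb
    intro S Γ hsub
    rcases Finset.mem_union.1 (hsub (Finset.mem_singleton_self _)) with hS | hΓ
    · have h1 := Finset.mem_image_of_mem PFml.neg hS
      exact (dRR p).mono (Finset.empty_subset _) (by simp [Finset.insert_subset_iff, h1])
    · exact (TCL.initNV false p).mono (Finset.singleton_subset_iff.2 hΓ)
        (Finset.subset_union_left)
  | initL c p =>
    subst hb
    intro S Γ hsub
    have hn := Finset.mem_union.1 (hsub (Finset.mem_insert_self _ _))
    have hp := Finset.mem_union.1 (hsub (Finset.mem_insert_of_mem (Finset.mem_singleton_self _)))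
    rcases hp with hpS | hpΓ
    · rcases hn with hnS | hnΓ
      · have h1 := Finset.mem_image_of_mem PFml.neg hnS
        have h2 := Finset.mem_image_of_mem PFml.neg hpS
        exact (dRR p).mono (Finset.empty_subset _) (by simp [Finset.insert_subset_iff, h1, h2])
      · have h2 := Finset.mem_image_of_mem PFml.neg hpS
        exact (TCL.initNV false p).mono (Finset.singleton_subset_iff.2 hnΓ) (by simp [h2])
    · rcases hn with hnS | hnΓ
      · have h1 := Finset.mem_image_of_mem PFml.neg hnS
        exact (dRnn p).mono (Finset.singleton_subset_iff.2 hpΓ) (by simp [h1])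
      · exact (TCL.initL false p).mono
          (by simp [Finset.insert_subset_iff, hnΓ, hpΓ]) (Finset.empty_subset _)
  | initR c p =>
    subst hb
    intro S Γ hsub
    exact (TCL.initR false p).mono (Finset.empty_subset _) (Finset.subset_union_left)
  | weL c Θ' Δ γ h ih =>
    subst hb
    intro S Γ hsub
    exact ih rfl S Γ (fun x hx => hsub (Finset.mem_insert_of_mem hx))
  | weR c Θ' Δ γ h ih =>
    subst hb
    intro S Γ hsub
    rw [Finset.insert_union]
    exact TCL.weR _ _ _ _ (ih rfl S Γ hsub)
  | andR c Θ' Δ a b h1 h2 ih1 ih2 =>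
    subst hb
    intro S Γ hsub
    have d1 := ih1 rfl S Γ hsub
    have d2 := ih2 rfl S Γ hsub
    rw [Finset.insert_union] at d1 d2
    rw [Finset.insert_union]
    exact TCL.andR _ _ _ _ _ d1 d2
  | orR c Θ' Δ a b h ih =>
    subst hb
    intro S Γ hsub
    have d := ih rfl S Γ hsub
    rw [Finset.insert_union, Finset.insert_union] at d
    rw [Finset.insert_union]
    exact TCL.orR _ _ _ _ _ d
  | impR c Θ' Δ a b h ih =>
    subst hb
    intro S Γ hsub
    have d := ih rfl S (insert a Γ) (sub_insert hsub)
    rw [Finset.insert_union] at d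
    rw [Finset.insert_union]
    exact TCL.impR _ _ _ _ _ d
  | nnR c Θ' Δ a h ih =>
    subst hb
    intro S Γ hsub
    have d := ih rfl S Γ hsub
    rw [Finset.insert_union] at d
    rw [Finset.insert_union]
    exact TCL.nnR _ _ _ _ d
  | nandR c Θ' Δ a b h ih =>
    subst hb
    intro S Γ hsub
    have d := ih rfl S (insert a (insert b Γ)) (sub_insert (sub_insert hsub))
    rw [Finset.insert_union]
    exact TCL.nandR _ _ _ _ _ d
  | norR c Θ' Δ a b h1 h2 ih1 ih2 =>
    subst hb
    intro S Γ hsub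
    have d1 := ih1 rfl S (insert a Γ) (sub_insert hsub)
    have d2 := ih2 rfl S (insert b Γ) (sub_insert hsub)
    rw [Finset.insert_union]
    exact TCL.norR _ _ _ _ _ d1 d2
  | nimpR c Θ' Δ a b h1 h2 ih1 ih2 =>
    subst hb
    intro S Γ hsub
    have d1 := ih1 rfl S Γ hsub
    have d2 := ih2 rfl S (insert b Γ) (sub_insert hsub)
    rw [Finset.insert_union] at d1
    rw [Finset.insert_union]
    exact TCL.nimpR _ _ _ _ _ d1 d2
  | andL c Θ' Δ a b h ih =>
    subst hb
    intro S Γ hsub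
    have hsub' := (Finset.insert_subset_iff.1 hsub).2
    have d := ih rfl S (insert a (insert b Γ)) (sub_insert (sub_insert hsub'))
    rcases Finset.mem_union.1 ((Finset.insert_subset_iff.1 hsub).1) with hS | hΓ
    · have h1m := Finset.mem_image_of_mem PFml.neg hS
      have d' := TCL.nandR _ _ _ _ _ d
      rwa [Finset.insert_eq_self.2 (Finset.mem_union_right _ h1m)] at d'
    · have d' := TCL.andL _ _ _ _ _ d
      rwa [Finset.insert_eq_self.2 hΓ] at d'
  | orL c Θ' Δ a b h1 h2 ih1 ih2 =>
    subst hb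
    intro S Γ hsub
    have hsub' := (Finset.insert_subset_iff.1 hsub).2
    have d1 := ih1 rfl S (insert a Γ) (sub_insert hsub')
    have d2 := ih2 rfl S (insert b Γ) (sub_insert hsub')
    rcases Finset.mem_union.1 ((Finset.insert_subset_iff.1 hsub).1) with hS | hΓ
    · have h1m := Finset.mem_image_of_mem PFml.neg hS
      have d' := TCL.norR _ _ _ _ _ d1 d2
      rwa [Finset.insert_eq_self.2 (Finset.mem_union_right _ h1m)] at d'
    · have d' := TCL.orL _ _ _ _ _ d1 d2
      rwa [Finset.insert_eq_self.2 hΓ] at d'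
  | impL c Θ' Δ a b h1 h2 ih1 ih2 =>
    subst hb
    intro S Γ hsub
    have hsub' := (Finset.insert_subset_iff.1 hsub).2
    have d1 := ih1 rfl S Γ hsub'
    rw [Finset.insert_union] at d1
    have d2 := ih2 rfl S (insert b Γ) (sub_insert hsub')
    rcases Finset.mem_union.1 ((Finset.insert_subset_iff.1 hsub).1) with hS | hΓ
    · have h1m := Finset.mem_image_of_mem PFml.neg hS
      have d' := TCL.nimpR _ _ _ _ _ d1 d2
      rwa [Finset.insert_eq_self.2 (Finset.mem_union_right _ h1m)] at d'
    · have d' := TCL.impL _ _ _ _ _ d1 d2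
      rwa [Finset.insert_eq_self.2 hΓ] at d'
  | nnL c Θ' Δ a h ih =>
    subst hb
    intro S Γ hsub
    have hsub' := (Finset.insert_subset_iff.1 hsub).2
    rcases Finset.mem_union.1 ((Finset.insert_subset_iff.1 hsub).1) with hS | hΓ
    · have h1m := Finset.mem_image_of_mem PFml.neg hS
      have d := ih rfl (insert a S) Γ (sub_insertL hsub')
      rw [Finset.image_insert, Finset.union_insert] at d
      have d' := TCL.nnR _ _ _ _ d
      rwa [Finset.insert_eq_self.2 (Finset.mem_union_right _ h1m)] at d'
    · have d := ih rfl S (insert a Γ) (sub_insert hsub')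
      have d' := TCL.nnL _ _ _ _ d
      rwa [Finset.insert_eq_self.2 hΓ] at d'
  | nandL c Θ' Δ a b h1 h2 ih1 ih2 =>
    subst hb
    intro S Γ hsub
    have hsub' := (Finset.insert_subset_iff.1 hsub).2
    have d1 := ih1 rfl S Γ hsub'
    have d2 := ih2 rfl S Γ hsub'
    rw [Finset.insert_union] at d1 d2
    rcases Finset.mem_union.1 ((Finset.insert_subset_iff.1 hsub).1) with hS | hΓ
    · have h1m := Finset.mem_image_of_mem PFml.neg hS
      have d' := TCL.nnR _ _ _ _ (TCL.andR _ _ _ _ _ d1 d2)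
      rwa [Finset.insert_eq_self.2 (Finset.mem_union_right _ h1m)] at d'
    · have d' := TCL.nandL _ _ _ _ _ d1 d2
      rwa [Finset.insert_eq_self.2 hΓ] at d'
  | norL c Θ' Δ a b h ih =>
    subst hb
    intro S Γ hsub
    have hsub' := (Finset.insert_subset_iff.1 hsub).2
    have d := ih rfl S Γ hsub'
    rw [Finset.insert_union, Finset.insert_union] at d
    rcases Finset.mem_union.1 ((Finset.insert_subset_iff.1 hsub).1) with hS | hΓ
    · have h1m := Finset.mem_image_of_mem PFml.neg hS
      have d' := TCL.nnR _ _ _ _ (TCL.orR _ _ _ _ _ d)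
      rwa [Finset.insert_eq_self.2 (Finset.mem_union_right _ h1m)] at d'
    · have d' := TCL.norL _ _ _ _ _ d
      rwa [Finset.insert_eq_self.2 hΓ] at d'
  | nimpL c Θ' Δ a b h ih =>
    subst hb
    intro S Γ hsub
    have hsub' := (Finset.insert_subset_iff.1 hsub).2
    have d := ih rfl S (insert a Γ) (sub_insert hsub')
    rw [Finset.insert_union] at d
    rcases Finset.mem_union.1 ((Finset.insert_subset_iff.1 hsub).1) with hS | hΓ
    · have h1m := Finset.mem_image_of_mem PFml.neg hS
      have d' := TCL.nnR _ _ _ _ (TCL.impR _ _ _ _ _ d)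
      rwa [Finset.insert_eq_self.2 (Finset.mem_union_right _ h1m)] at d'
    · have d' := TCL.nimpL _ _ _ _ _ d
      rwa [Finset.insert_eq_self.2 hΓ] at d'

/-- the rules (¬left) and (¬right) are admissible in cut-free TCL. -/
theorem stmt16 (Γ Δ : PCtx) (α : PFml) :
    (TCL false Γ (insert α Δ) → TCL false (insert α.neg Γ) Δ) ∧
    (TCL false (insert α Γ) Δ → TCL false Γ (insert α.neg Δ)) := by
  constructor
  · intro h
    have d := negAdmP h {α} Δ
      (Finset.insert_subset_iff.2 ⟨Finset.mem_union_left _ (Finset.mem_singleton_self _),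
        Finset.subset_union_right⟩)
    rwa [Finset.image_singleton, Finset.union_comm, ← Finset.insert_eq] at d
  · intro h
    have d := negAdmQ h {α} Γ
      (Finset.insert_subset_iff.2 ⟨Finset.mem_union_left _ (Finset.mem_singleton_self _),
        Finset.subset_union_right⟩)
    rwa [Finset.image_singleton, Finset.union_comm, ← Finset.insert_eq] at d
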